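/- arXiv:2210.09936 — 6 statements merged into one kernel-verified Lean document; each statement's English description precedes it below -/
import Mathlib

section
/- Every tournament on 2^(k-1) vertices contains a transitive subtournament on k vertices. -/
def IsTournament {V : Type*} (r : V → V → Prop) : Prop :=
  (∀ v, ¬ r v v) ∧ ∀ u v : V, u ≠ v → (r u v ↔ ¬ r v u)

def TransOn {V : Type*} (r : V → V → Prop) (S : Set V) : Prop :=
  ∀ a ∈ S, ∀ b ∈ S, ∀ c ∈ S, r a b → r b c → r a c

def Colorable {V : Type*} (r : V → V → Prop) (k : ℕ) : Prop :=
  ∃ f : V → Fin k, ∀ c : Fin k, TransOn r {v | f v = c}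

lemma insert_transOn {V : Type*} [DecidableEq V] {r : V → V → Prop} (hT : IsTournament r)
    {S : Finset V} {v : V} (hv : v ∉ S) (hS : TransOn r ↑S)
    (hdom : (∀ u ∈ S, r v u) ∨ (∀ u ∈ S, r u v)) : TransOn r ↑(insert v S) := by
  have key : ∀ u ∈ S, (r v u ↔ ¬ r u v) := by
    intro u hu
    have hne : v ≠ u := fun h => hv (h ▸ hu)
    exact hT.2 v u hne
  intro a ha b hb c hc hab hbc
  simp only [Finset.coe_insert, Set.mem_insert_iff, Finset.mem_coe] at ha hb hc
  rcases hdom with hd | hd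
  · -- v dominates S
    rcases ha with rfl | ha
    · rcases hc with rfl | hc
      · rcases hb with rfl | hb
        · exact hab
        · exact absurd hbc ((key b hb).mp (hd b hb))
      · exact hd c hc
    · rcases hb with rfl | hb
      · exact absurd hab ((key a ha).mp (hd a ha))
      · rcases hc with rfl | hc
        · exact absurd hbc ((key b hb).mp (hd b hb))
        · exact hS a ha b hb c hc hab hbc
  · -- S dominates v
    have hnd : ∀ u ∈ S, ¬ r v u := fun u hu h => ((key u hu).mp h) (hd u hu)
    rcases ha with rfl | ha
    · rcases hb with rfl | hb
      · exact absurd hab (hT.1 _)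
      · exact absurd hab (hnd b hb)
    · rcases hc with rfl | hc
      · exact hd a ha
      · rcases hb with rfl | hb
        · exact absurd hbc (hnd c hc)
        · exact hS a ha b hb c hc hab hbc

lemma aux_trans {V : Type*} [DecidableEq V] (r : V → V → Prop) (hT : IsTournament r) :
    ∀ k : ℕ, ∀ A : Finset V, 2 ^ (k - 1) ≤ A.card →
      ∃ S : Finset V, S ⊆ A ∧ S.card = k ∧ TransOn r ↑S := by
  intro k
  induction k with
  | zero =>
    intro A _
    exact ⟨∅, Finset.empty_subset A, rfl, by intro a ha; simp at ha⟩
  | succ k ih =>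
    intro A hA
    classical
    have hpos : 0 < A.card := lt_of_lt_of_le (Nat.pow_pos (by norm_num)) hA
    obtain ⟨v, hv⟩ := Finset.card_pos.mp hpos
    rcases Nat.eq_zero_or_pos k with hk0 | hk
    · subst hk0
      refine ⟨{v}, Finset.singleton_subset_iff.mpr hv, rfl, ?_⟩
      intro a ha b hb c hc hab hbc
      simp only [Finset.coe_singleton, Set.mem_singleton_iff] at ha hb hc
      subst ha; subst hb; subst hc; exact hab
    · set Out := (A.erase v).filter (fun u => r v u) with hOutdef
      set In := (A.erase v).filter (fun u => ¬ r v u) with hIndef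
      have hsplit : Out.card + In.card = A.card - 1 := by
        rw [hOutdef, hIndef, Finset.card_filter_add_card_filter_not,
          Finset.card_erase_of_mem hv]
      have hA' : 2 ^ k ≤ A.card := by simpa using hA
      have h2 : 2 ^ k = 2 * 2 ^ (k - 1) := by
        rw [← pow_succ']
        congr 1
        omega
      have hmax : 2 ^ (k - 1) ≤ Out.card ∨ 2 ^ (k - 1) ≤ In.card := by omega
      rcases hmax with hm | hm
      · obtain ⟨S, hSsub, hScard, hStrans⟩ := ih Out hm
        have hSA : S ⊆ A := hSsub.trans ((Finset.filter_subset _ _).trans (Finset.erase_subset _ _))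
        have hvS : v ∉ S := fun h => Finset.notMem_erase v A
          (Finset.mem_of_mem_filter v (hSsub h))
        refine ⟨insert v S, Finset.insert_subset hv hSA, ?_, ?_⟩
        · rw [Finset.card_insert_of_notMem hvS, hScard]
        · refine insert_transOn hT hvS hStrans (Or.inl ?_)
          intro u hu
          exact (Finset.mem_filter.mp (hSsub hu)).2
      · obtain ⟨S, hSsub, hScard, hStrans⟩ := ih In hm
        have hSA : S ⊆ A := hSsub.trans ((Finset.filter_subset _ _).trans (Finset.erase_subset _ _))
        have hvS : v ∉ S := fun h => Finset.notMem_erase v A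
          (Finset.mem_of_mem_filter v (hSsub h))
        refine ⟨insert v S, Finset.insert_subset hv hSA, ?_, ?_⟩
        · rw [Finset.card_insert_of_notMem hvS, hScard]
        · refine insert_transOn hT hvS hStrans (Or.inr ?_)
          intro u hu
          have hmem := Finset.mem_filter.mp (hSsub hu)
          have hne : u ≠ v := Finset.ne_of_mem_erase hmem.1
          exact (hT.2 u v hne).mpr hmem.2

theorem stmt0 (k : ℕ) (V : Type*) [Fintype V] [DecidableEq V] (r : V → V → Prop)
    (hT : IsTournament r) (hcard : Fintype.card V = 2 ^ (k - 1)) :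
    ∃ S : Finset V, S.card = k ∧ TransOn r ↑S := by
  obtain ⟨S, _, hcardS, htrans⟩ := aux_trans r hT k Finset.univ
    (by rw [Finset.card_univ, hcard])
  exact ⟨S, hcardS, htrans⟩
end

section
/- Every tournament on 6 vertices is 2-colorable, i.e., its vertex set can be partitioned into two sets each inducing a transitive subtournament. -/
/-- bit index of the pair `(i,j)` with `i < j < 6` among the 15 unordered pairs -/
def pid (i j : Nat) : Nat := i*5 - i*(i-1)/2 + j - i - 1

/-- edge orientation of tournament encoded by `n` -/
def E (n i j : Nat) : Bool :=
  if i = j then false else if i < j then n.testBit (pid i j) else !(n.testBit (pid j i))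

/-- the triple with pair-bits `a b c` (= pid i j, pid j k, pid i k for i<j<k) is a 3-cycle -/
def cyc (n a b c : Nat) : Bool := (n.testBit a == n.testBit b) && (n.testBit a != n.testBit c)

def c7 (n : Nat) : Bool := !(cyc n 0 5 1) && !(cyc n 12 14 13)
def c11 (n : Nat) : Bool := !(cyc n 0 6 2) && !(cyc n 10 14 11)
def c13 (n : Nat) : Bool := !(cyc n 1 9 2) && !(cyc n 7 14 8)
def c14 (n : Nat) : Bool := !(cyc n 5 9 6) && !(cyc n 3 14 4)
def c19 (n : Nat) : Bool := !(cyc n 0 7 3) && !(cyc n 9 13 11)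
def c28 (n : Nat) : Bool := !(cyc n 9 12 10) && !(cyc n 0 8 4)
def c21 (n : Nat) : Bool := !(cyc n 1 10 3) && !(cyc n 6 13 8)
def c22 (n : Nat) : Bool := !(cyc n 5 10 7) && !(cyc n 2 13 4)
def good (n : Nat) : Bool := c7 n || c11 n || c13 n || c14 n || c19 n || c28 n || c21 n || c22 n

def okPow (lo : Nat) : Nat → Bool
  | 0 => good lo
  | e+1 => okPow lo e && okPow (lo + 2^e) e

set_option maxRecDepth 20000 in
set_option maxHeartbeats 4000000 in
theorem okPow15 : okPow 0 15 = true := by decide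

theorem okPow_spec : ∀ (e lo : Nat), okPow lo e = true → ∀ m < 2^e, good (lo + m) = true := by
  intro e
  induction e with
  | zero => intro lo h m hm; interval_cases m; simpa [okPow] using h
  | succ e ih =>
    intro lo h m hm
    rw [okPow, Bool.and_eq_true] at h
    by_cases hm' : m < 2^e
    · exact ih lo h.1 m hm'
    · have h2 := ih (lo + 2^e) h.2 (m - 2^e) (by rw [pow_succ] at hm; omega)
      have : lo + 2^e + (m - 2^e) = lo + m := by omega
      rwa [this] at h2

theorem goodAll : ∀ n < 32768, good n = true := by
  intro n hn
  simpa using okPow_spec 15 0 okPow15 n (by norm_num [hn])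

theorem E_irrefl (n i : Nat) : E n i i = false := by simp [E]

theorem E_antisymm (n i j : Nat) (h : i ≠ j) : E n j i = !(E n i j) := by
  rcases Nat.lt_trichotomy i j with h' | h' | h'
  · simp [E, h, Ne.symm h, h', Nat.lt_asymm h']
  · exact absurd h' h
  · simp [E, h, Ne.symm h, h', Nat.lt_asymm h']

theorem E_lt {i j : Nat} (n : Nat) (h : i < j) : E n i j = n.testBit (pid i j) := by
  simp [E, Nat.ne_of_lt h, h]

theorem cycE {a b c : Nat} (n : Nat) (h1 : a < b) (h2 : b < c) :
    cyc n (pid a b) (pid b c) (pid a c) =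
      ((E n a b == E n b c) && (E n a b != E n a c)) := by
  rw [cyc, E_lt n h1, E_lt n h2, E_lt n (h1.trans h2)]

def KeyProp (n s : Nat) : Prop :=
  ∀ i j k : Nat, i < 6 → j < 6 → k < 6 →
    s.testBit i = s.testBit j → s.testBit j = s.testBit k →
    E n i j = true → E n j k = true → E n i k = true

theorem transKey (n s : Nat)
    (H : ∀ k < 6, ∀ j < k, ∀ i < j,
      s.testBit i = s.testBit j → s.testBit j = s.testBit k →
      cyc n (pid i j) (pid j k) (pid i k) = false) :
    KeyProp n s := by
  intro i j k hi hj hk m1 m2 eij ejk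
  by_contra hik'
  have hik : E n i k = false := by
    cases hikv : E n i k
    · rfl
    · exact absurd hikv hik'
  have hij' : i ≠ j := by rintro rfl; rw [E_irrefl] at eij; exact Bool.false_ne_true eij
  have hjk' : j ≠ k := by rintro rfl; rw [E_irrefl] at ejk; exact Bool.false_ne_true ejk
  have hik'' : i ≠ k := by
    rintro rfl
    rw [E_antisymm n i j hij', eij] at ejk
    simp at ejk
  have eji : E n j i = false := by rw [E_antisymm n i j hij', eij]; rfl
  have ekj : E n k j = false := by rw [E_antisymm n j k hjk', ejk]; rfl
  have eki : E n k i = true := by rw [E_antisymm n i k hik'', hik]; rfl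
  rcases Nat.lt_trichotomy i j with h1 | h1 | h1
  · rcases Nat.lt_trichotomy j k with h2 | h2 | h2
    · -- i < j < k
      have := H k hk j h2 i h1 m1 m2
      rw [cycE n h1 h2, eij, ejk, hik] at this
      simp at this
    · exact absurd h2 hjk'
    · rcases Nat.lt_trichotomy i k with h3 | h3 | h3
      · -- i < k < j
        have := H j hj k h2 i h3 (m1.trans m2) m2.symm
        rw [cycE n h3 h2, hik, ekj, eij] at this
        simp at this
      · exact absurd h3 hik''
      · -- k < i < j
        have := H j hj i h1 k h3 (m2.symm.trans m1.symm) m1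
        rw [cycE n h3 h1, eki, eij, ekj] at this
        simp at this
  · exact absurd h1 hij'
  · rcases Nat.lt_trichotomy i k with h2 | h2 | h2
    · -- j < i < k
      have := H k hk i h2 j h1 m1.symm (m1.trans m2)
      rw [cycE n h1 h2, eji, hik, ejk] at this
      simp at this
    · exact absurd h2 hik''
    · rcases Nat.lt_trichotomy j k with h3 | h3 | h3
      · -- j < k < i
        have := H i hi k h2 j h3 m2 (m2.symm.trans m1.symm)
        rw [cycE n h3 h2, ejk, eki, eji] at this
        simp at this
      · exact absurd h3 hjk'
      · -- k < j < i
        have := H i hi j h1 k h3 m2.symm m1.symm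
        rw [cycE n h3 h1, ekj, eji, eki] at this
        simp at this

set_option maxRecDepth 2000 in
set_option synthInstance.maxSize 2048 in
theorem mono7 : ∀ k < 6, ∀ j < k, ∀ i < j,
    (7:Nat).testBit i = (7:Nat).testBit j → (7:Nat).testBit j = (7:Nat).testBit k →
    (i=0 ∧ j=1 ∧ k=2) ∨ (i=3 ∧ j=4 ∧ k=5) := by decide

theorem key7 (n : Nat) (h : c7 n = true) : KeyProp n 7 := by
  rw [c7, Bool.and_eq_true, Bool.not_eq_true'] at h
  refine transKey n 7 ?_
  intro k hk j hjk i hij m1 m2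
  rcases mono7 k hk j hjk i hij m1 m2 with ⟨rfl, rfl, rfl⟩ | ⟨rfl, rfl, rfl⟩
  · simpa [pid] using h.1
  · simpa [pid] using h.2

set_option maxRecDepth 2000 in
set_option synthInstance.maxSize 2048 in
theorem mono11 : ∀ k < 6, ∀ j < k, ∀ i < j,
    (11:Nat).testBit i = (11:Nat).testBit j → (11:Nat).testBit j = (11:Nat).testBit k →
    (i=0 ∧ j=1 ∧ k=3) ∨ (i=2 ∧ j=4 ∧ k=5) := by decide

theorem key11 (n : Nat) (h : c11 n = true) : KeyProp n 11 := by
  rw [c11, Bool.and_eq_true, Bool.not_eq_true'] at h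
  refine transKey n 11 ?_
  intro k hk j hjk i hij m1 m2
  rcases mono11 k hk j hjk i hij m1 m2 with ⟨rfl, rfl, rfl⟩ | ⟨rfl, rfl, rfl⟩
  · simpa [pid] using h.1
  · simpa [pid] using h.2

set_option maxRecDepth 2000 in
set_option synthInstance.maxSize 2048 in
theorem mono13 : ∀ k < 6, ∀ j < k, ∀ i < j,
    (13:Nat).testBit i = (13:Nat).testBit j → (13:Nat).testBit j = (13:Nat).testBit k →
    (i=0 ∧ j=2 ∧ k=3) ∨ (i=1 ∧ j=4 ∧ k=5) := by decide

theorem key13 (n : Nat) (h : c13 n = true) : KeyProp n 13 := by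
  rw [c13, Bool.and_eq_true, Bool.not_eq_true'] at h
  refine transKey n 13 ?_
  intro k hk j hjk i hij m1 m2
  rcases mono13 k hk j hjk i hij m1 m2 with ⟨rfl, rfl, rfl⟩ | ⟨rfl, rfl, rfl⟩
  · simpa [pid] using h.1
  · simpa [pid] using h.2

set_option maxRecDepth 2000 in
set_option synthInstance.maxSize 2048 in
theorem mono14 : ∀ k < 6, ∀ j < k, ∀ i < j,
    (14:Nat).testBit i = (14:Nat).testBit j → (14:Nat).testBit j = (14:Nat).testBit k →
    (i=1 ∧ j=2 ∧ k=3) ∨ (i=0 ∧ j=4 ∧ k=5) := by decide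

theorem key14 (n : Nat) (h : c14 n = true) : KeyProp n 14 := by
  rw [c14, Bool.and_eq_true, Bool.not_eq_true'] at h
  refine transKey n 14 ?_
  intro k hk j hjk i hij m1 m2
  rcases mono14 k hk j hjk i hij m1 m2 with ⟨rfl, rfl, rfl⟩ | ⟨rfl, rfl, rfl⟩
  · simpa [pid] using h.1
  · simpa [pid] using h.2

set_option maxRecDepth 2000 in
set_option synthInstance.maxSize 2048 in
theorem mono19 : ∀ k < 6, ∀ j < k, ∀ i < j,
    (19:Nat).testBit i = (19:Nat).testBit j → (19:Nat).testBit j = (19:Nat).testBit k →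
    (i=0 ∧ j=1 ∧ k=4) ∨ (i=2 ∧ j=3 ∧ k=5) := by decide

theorem key19 (n : Nat) (h : c19 n = true) : KeyProp n 19 := by
  rw [c19, Bool.and_eq_true, Bool.not_eq_true'] at h
  refine transKey n 19 ?_
  intro k hk j hjk i hij m1 m2
  rcases mono19 k hk j hjk i hij m1 m2 with ⟨rfl, rfl, rfl⟩ | ⟨rfl, rfl, rfl⟩
  · simpa [pid] using h.1
  · simpa [pid] using h.2

set_option maxRecDepth 2000 in
set_option synthInstance.maxSize 2048 in
theorem mono28 : ∀ k < 6, ∀ j < k, ∀ i < j,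
    (28:Nat).testBit i = (28:Nat).testBit j → (28:Nat).testBit j = (28:Nat).testBit k →
    (i=2 ∧ j=3 ∧ k=4) ∨ (i=0 ∧ j=1 ∧ k=5) := by decide

theorem key28 (n : Nat) (h : c28 n = true) : KeyProp n 28 := by
  rw [c28, Bool.and_eq_true, Bool.not_eq_true'] at h
  refine transKey n 28 ?_
  intro k hk j hjk i hij m1 m2
  rcases mono28 k hk j hjk i hij m1 m2 with ⟨rfl, rfl, rfl⟩ | ⟨rfl, rfl, rfl⟩
  · simpa [pid] using h.1
  · simpa [pid] using h.2

set_option maxRecDepth 2000 in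
set_option synthInstance.maxSize 2048 in
theorem mono21 : ∀ k < 6, ∀ j < k, ∀ i < j,
    (21:Nat).testBit i = (21:Nat).testBit j → (21:Nat).testBit j = (21:Nat).testBit k →
    (i=0 ∧ j=2 ∧ k=4) ∨ (i=1 ∧ j=3 ∧ k=5) := by decide

theorem key21 (n : Nat) (h : c21 n = true) : KeyProp n 21 := by
  rw [c21, Bool.and_eq_true, Bool.not_eq_true'] at h
  refine transKey n 21 ?_
  intro k hk j hjk i hij m1 m2
  rcases mono21 k hk j hjk i hij m1 m2 with ⟨rfl, rfl, rfl⟩ | ⟨rfl, rfl, rfl⟩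
  · simpa [pid] using h.1
  · simpa [pid] using h.2

set_option maxRecDepth 2000 in
set_option synthInstance.maxSize 2048 in
theorem mono22 : ∀ k < 6, ∀ j < k, ∀ i < j,
    (22:Nat).testBit i = (22:Nat).testBit j → (22:Nat).testBit j = (22:Nat).testBit k →
    (i=1 ∧ j=2 ∧ k=4) ∨ (i=0 ∧ j=3 ∧ k=5) := by decide

theorem key22 (n : Nat) (h : c22 n = true) : KeyProp n 22 := by
  rw [c22, Bool.and_eq_true, Bool.not_eq_true'] at h
  refine transKey n 22 ?_
  intro k hk j hjk i hij m1 m2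
  rcases mono22 k hk j hjk i hij m1 m2 with ⟨rfl, rfl, rfl⟩ | ⟨rfl, rfl, rfl⟩
  · simpa [pid] using h.1
  · simpa [pid] using h.2

theorem exists_key (n : Nat) (hn : n < 32768) : ∃ s : Nat, KeyProp n s := by
  have h := goodAll n hn
  rw [good, Bool.or_eq_true, Bool.or_eq_true, Bool.or_eq_true, Bool.or_eq_true,
    Bool.or_eq_true, Bool.or_eq_true, Bool.or_eq_true] at h
  rcases h with ((((((h | h) | h) | h) | h) | h) | h) | h
  · exact ⟨7, key7 n h⟩
  · exact ⟨11, key11 n h⟩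
  · exact ⟨13, key13 n h⟩
  · exact ⟨14, key14 n h⟩
  · exact ⟨19, key19 n h⟩
  · exact ⟨28, key28 n h⟩
  · exact ⟨21, key21 n h⟩
  · exact ⟨22, key22 n h⟩

def bits : List Bool → Nat
  | [] => 0
  | b :: l => (cond b 1 0) + 2 * bits l

theorem bits_testBit : ∀ (l : List Bool) (i : Nat), (bits l).testBit i = l.getD i false := by
  intro l
  induction l with
  | nil => intro i; simp [bits, Nat.zero_testBit]
  | cons b l ih =>
    intro i
    cases i with
    | zero =>
      rw [Nat.testBit_zero]
      cases b <;> simp [bits] <;> omega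
    | succ i =>
      rw [Nat.testBit_add_one]
      have : (cond b 1 0 + 2 * bits l) / 2 = bits l := by cases b <;> simp <;> omega
      rw [bits, this]
      simpa using ih i

theorem bits_lt : ∀ l : List Bool, bits l < 2 ^ l.length := by
  intro l
  induction l with
  | nil => simp [bits]
  | cons b l ih =>
    have : 2 ^ (b :: l).length = 2 * 2 ^ l.length := by rw [List.length_cons, pow_succ]; ring
    rw [this, bits]
    cases b <;> simp <;> omega

theorem stmt2 (V : Type*) [Fintype V] (r : V → V → Prop)
    (hT : IsTournament r) (hcard : Fintype.card V = 6) :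
    Colorable r 2 := by
  classical
  let e : V ≃ Fin 6 := Fintype.equivFinOfCardEq hcard
  let g : Fin 6 → Fin 6 → Bool := fun i j => decide (r (e.symm i) (e.symm j))
  let L : List Bool := [g 0 1, g 0 2, g 0 3, g 0 4, g 0 5, g 1 2, g 1 3, g 1 4, g 1 5,
    g 2 3, g 2 4, g 2 5, g 3 4, g 3 5, g 4 5]
  let n : Nat := bits L
  have hn : n < 32768 := by
    have := bits_lt L
    norm_num [L] at this
    exact this
  have hg : ∀ i j : Fin 6, g i j = true ↔ r (e.symm i) (e.symm j) := by
    intro i j; simp [g]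
  have hL : ∀ m, n.testBit m = L.getD m false := bits_testBit L
  have hgE : ∀ i j : Fin 6, i < j → E n i.val j.val = g i j := by
    intro i j hij
    fin_cases i <;> fin_cases j <;>
      simp_all [E, pid, hL, L, List.getD]
  have hEr : ∀ i j : Fin 6, i ≠ j → (E n i.val j.val = true ↔ r (e.symm i) (e.symm j)) := by
    intro i j hij
    have hvne : i.val ≠ j.val := fun h => hij (Fin.val_injective h)
    rcases lt_or_gt_of_ne hij with h | h
    · rw [hgE i j h]; exact hg i j
    · have hsne : e.symm i ≠ e.symm j := fun h' => hij (e.symm.injective h')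
      rw [E_antisymm n j.val i.val (Ne.symm hvne), hgE j i h]
      rw [hT.2 (e.symm i) (e.symm j) hsne]
      rw [← hg j i]
      cases hv : g j i <;> simp [hv]
  obtain ⟨s, hs⟩ := exists_key n hn
  refine ⟨fun v => if s.testBit (e v).val then 0 else 1, ?_⟩
  intro c0 a ha b hb c hc rab rbc
  simp only [Set.mem_setOf_eq] at ha hb hc
  have mono : ∀ x y : V, (if s.testBit (e x).val then (0:Fin 2) else 1) = c0 →
      (if s.testBit (e y).val then (0:Fin 2) else 1) = c0 →
      s.testBit (e x).val = s.testBit (e y).val := by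
    intro x y hx hy
    cases h1 : s.testBit (e x).val <;> cases h2 : s.testBit (e y).val <;> simp_all <;>
      exact absurd (hx.trans hy.symm) (by decide)
  have mab := mono a b ha hb
  have mbc := mono b c hb hc
  have hab : a ≠ b := by rintro rfl; exact hT.1 a rab
  have hbc : b ≠ c := by rintro rfl; exact hT.1 b rbc
  have hac : a ≠ c := by
    rintro rfl
    exact ((hT.2 a b hab).mp rab) rbc
  have eab : e a ≠ e b := fun h => hab (e.injective h)
  have ebc : e b ≠ e c := fun h => hbc (e.injective h)
  have eac : e a ≠ e c := fun h => hac (e.injective h)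
  have h1 : E n (e a).val (e b).val = true := by
    rw [hEr (e a) (e b) eab]; simpa using rab
  have h2 : E n (e b).val (e c).val = true := by
    rw [hEr (e b) (e c) ebc]; simpa using rbc
  have h3 := hs (e a).val (e b).val (e c).val (e a).isLt (e b).isLt (e c).isLt mab mbc h1 h2
  rw [hEr (e a) (e c) eac] at h3
  simpa using h3
end

section
/- For every arc (i, j) of the tournament X_13 there exists an automorphism of X_13 mapping i to 0 and j to either 1 or 2. -/
def x13 (i j : ZMod 13) : Prop :=
  j - i = 1 ∨ j - i = 2 ∨ j - i = 3 ∨ j - i = 5 ∨ j - i = 6 ∨ j - i = 9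

instance (i j : ZMod 13) : Decidable (x13 i j) := by
  unfold x13; infer_instance

lemma mul_pres (c : ZMod 13) (hc : c = 1 ∨ c = 3 ∨ c = 9) :
    ∀ a b : ZMod 13, x13 (c * a) (c * b) ↔ x13 a b := by
  rcases hc with rfl | rfl | rfl <;> decide

lemma aux_exists (i : ZMod 13) (c : ZMod 13) (hc : c = 1 ∨ c = 3 ∨ c = 9) :
    ∃ f : ZMod 13 ≃ ZMod 13, (∀ a b, x13 (f a) (f b) ↔ x13 a b) ∧
      (∀ x, f x = c * (x - i)) := by
  have hc0 : c ≠ 0 := by rcases hc with rfl | rfl | rfl <;> decide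
  haveI : Fact (Nat.Prime 13) := ⟨by norm_num⟩
  refine ⟨(Equiv.subRight i).trans (Equiv.mulLeft₀ c hc0), ?_, fun x => rfl⟩
  intro a b
  show x13 (c * (a - i)) (c * (b - i)) ↔ x13 a b
  rw [mul_pres c hc]
  unfold x13
  rw [sub_sub_sub_cancel_right]

theorem stmt12 (i j : ZMod 13) (h : x13 i j) :
    ∃ f : ZMod 13 ≃ ZMod 13, (∀ a b, x13 (f a) (f b) ↔ x13 a b) ∧
      f i = 0 ∧ (f j = 1 ∨ f j = 2) := by
  have key : ∀ c : ZMod 13, (c = 1 ∨ c = 3 ∨ c = 9) →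
      (c * (j - i) = 1 ∨ c * (j - i) = 2) →
      ∃ f : ZMod 13 ≃ ZMod 13, (∀ a b, x13 (f a) (f b) ↔ x13 a b) ∧
        f i = 0 ∧ (f j = 1 ∨ f j = 2) := by
    intro c hc hcd
    obtain ⟨f, hf, hfx⟩ := aux_exists i c hc
    exact ⟨f, hf, by rw [hfx]; ring, by rw [hfx]; exact hcd⟩
  rcases h with hd | hd | hd | hd | hd | hd
  · exact key 1 (by tauto) (by rw [hd]; decide)
  · exact key 1 (by tauto) (by rw [hd]; decide)
  · exact key 9 (by tauto) (by rw [hd]; decide)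
  · exact key 3 (by tauto) (by rw [hd]; decide)
  · exact key 9 (by tauto) (by rw [hd]; decide)
  · exact key 3 (by tauto) (by rw [hd]; decide)
end

section
/- If A is a 4-element subset of ZMod 13 inducing a transitive subtournament of X_13 whose two vertices of highest out-degree within A are {0,1} or {0,2}, then A is one of {0,1,2,3}, {0,1,3,6}, {0,1,6,2}, {0,2,3,5}. -/
instance x13.decidable : ∀ i j, Decidable (x13 i j) := fun i j => by unfold x13; infer_instance

theorem aux13 : ∀ a b c d : ZMod 13, x13 a b → x13 a c → x13 a d → x13 b c → x13 b d → x13 c d →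
    (({a, b} : Finset (ZMod 13)) = {0, 1} ∨ ({a, b} : Finset (ZMod 13)) = {0, 2}) →
    ({a,b,c,d} : Finset (ZMod 13)) = {0, 1, 2, 3} ∨ ({a,b,c,d} : Finset (ZMod 13)) = {0, 1, 3, 6} ∨
    ({a,b,c,d} : Finset (ZMod 13)) = {0, 1, 6, 2} ∨ ({a,b,c,d} : Finset (ZMod 13)) = {0, 2, 3, 5} := by
  decide

theorem stmt13 (A : Finset (ZMod 13)) (hcard : A.card = 4) (htrans : TransOn x13 ↑A)
    (a b c d : ZMod 13) (hA : A = {a, b, c, d})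
    (hab : x13 a b) (hac : x13 a c) (had : x13 a d)
    (hbc : x13 b c) (hbd : x13 b d) (hcd : x13 c d)
    (htop : ({a, b} : Finset (ZMod 13)) = {0, 1} ∨ ({a, b} : Finset (ZMod 13)) = {0, 2}) :
    A = ({0, 1, 2, 3} : Finset (ZMod 13)) ∨ A = ({0, 1, 3, 6} : Finset (ZMod 13)) ∨
    A = ({0, 1, 6, 2} : Finset (ZMod 13)) ∨ A = ({0, 2, 3, 5} : Finset (ZMod 13)) := by
  subst hA
  exact aux13 a b c d hab hac had hbc hbd hcd htop
end

section
/- The tournament T_1 obtained from X_13 by removing the vertices {0,1,2,3} has no non-trivial automorphism. -/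
def aBool (i j : Fin 9) : Bool :=
  decide ((j.val + 13 - i.val) % 13 = 1 ∨ (j.val + 13 - i.val) % 13 = 2 ∨
    (j.val + 13 - i.val) % 13 = 3 ∨ (j.val + 13 - i.val) % 13 = 5 ∨
    (j.val + 13 - i.val) % 13 = 6 ∨ (j.val + 13 - i.val) % 13 = 9)

def degA (i : Fin 9) : ℕ := (Finset.univ.filter (fun j => aBool i j = true)).card

def d2A (i : Fin 9) : ℕ :=
  (Finset.univ.filter (fun j => aBool i j = true ∧ degA j = degA i)).card

lemma distinct_inv : ∀ i j : Fin 9, degA j = degA i → d2A j = d2A i → j = i := by decide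

lemma rigid (g : Equiv.Perm (Fin 9)) (hg : ∀ i j, aBool (g i) (g j) = aBool i j) :
    ∀ i, g i = i := by
  have himg : ∀ i, Finset.univ.filter (fun j => aBool (g i) j = true) =
      (Finset.univ.filter (fun j => aBool i j = true)).image g := by
    intro i
    ext j
    simp only [Finset.mem_filter, Finset.mem_image, Finset.mem_univ, true_and]
    constructor
    · intro h
      refine ⟨g.symm j, ?_, g.apply_symm_apply j⟩
      have := hg i (g.symm j)
      rw [g.apply_symm_apply] at this
      rw [← this]; exact h
    · rintro ⟨k, hk, rfl⟩
      rw [hg i k]; exact hk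
  have hdeg : ∀ i, degA (g i) = degA i := by
    intro i
    unfold degA
    rw [himg, Finset.card_image_of_injective _ g.injective]
  have himg2 : ∀ i, Finset.univ.filter (fun j => aBool (g i) j = true ∧ degA j = degA (g i)) =
      (Finset.univ.filter (fun j => aBool i j = true ∧ degA j = degA i)).image g := by
    intro i
    ext j
    simp only [Finset.mem_filter, Finset.mem_image, Finset.mem_univ, true_and]
    constructor
    · rintro ⟨h1, h2⟩
      refine ⟨g.symm j, ⟨?_, ?_⟩, g.apply_symm_apply j⟩
      · have := hg i (g.symm j)
        rw [g.apply_symm_apply] at this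
        rw [← this]; exact h1
      · have := hdeg (g.symm j)
        rw [g.apply_symm_apply] at this
        rw [← this, h2, hdeg i]
    · rintro ⟨k, ⟨hk1, hk2⟩, rfl⟩
      exact ⟨by rw [hg i k]; exact hk1, by rw [hdeg k, hdeg i, hk2]⟩
  have hd2 : ∀ i, d2A (g i) = d2A i := by
    intro i
    unfold d2A
    rw [himg2, Finset.card_image_of_injective _ g.injective]
  intro i
  exact distinct_inv i (g i) (hdeg i) (hd2 i)

def T1verts : Set (ZMod 13) := {4, 5, 6, 7, 8, 9, 10, 11, 12}

def ofF (k : Fin 9) : T1verts :=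
  ⟨((k.val + 4 : ℕ) : ZMod 13), by
    fin_cases k <;> simp only [T1verts, Set.mem_insert_iff, Set.mem_singleton_iff] <;> decide⟩

def toF (v : T1verts) : Fin 9 :=
  ⟨(v.val.val + 9) % 13 % 9, Nat.mod_lt _ (by norm_num)⟩

lemma mem_T1 (v : ZMod 13) : v ∈ T1verts ↔
    v = 4 ∨ v = 5 ∨ v = 6 ∨ v = 7 ∨ v = 8 ∨ v = 9 ∨ v = 10 ∨ v = 11 ∨ v = 12 := by
  simp [T1verts]

lemma left_inv' : ∀ v : T1verts, ofF (toF v) = v := by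
  rintro ⟨x, hx⟩
  rw [mem_T1] at hx
  rcases hx with h | h | h | h | h | h | h | h | h <;> subst h <;> exact Subtype.ext (by simp only [ofF, toF]; decide)

lemma right_inv' : ∀ k : Fin 9, toF (ofF k) = k := by decide

def eT : T1verts ≃ Fin 9 := ⟨toF, ofF, left_inv', right_inv'⟩

lemma aBool_iff : ∀ i j : Fin 9, aBool i j = true ↔ x13 ((ofF i : T1verts) : ZMod 13) (ofF j) := by
  decide

theorem stmt14 (f : T1verts ≃ T1verts)
    (hf : ∀ i j : T1verts, x13 (f i : ZMod 13) (f j : ZMod 13) ↔ x13 (i : ZMod 13) (j : ZMod 13)) :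
    f = Equiv.refl T1verts := by
  set g : Equiv.Perm (Fin 9) := (eT.symm.trans f).trans eT with hgdef
  have hgval : ∀ i, g i = toF (f (ofF i)) := fun i => rfl
  have hofg : ∀ i, (ofF (g i) : T1verts) = f (ofF i) := by
    intro i
    rw [hgval]
    exact left_inv' (f (ofF i))
  have hg : ∀ i j, aBool (g i) (g j) = aBool i j := by
    intro i j
    rw [Bool.eq_iff_iff, aBool_iff, aBool_iff, hofg, hofg]
    exact hf (ofF i) (ofF j)
  have hfix := rigid g hg
  apply Equiv.ext
  intro v
  have h1 : ofF (g (toF v)) = f (ofF (toF v)) := hofg (toF v)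
  rw [hfix (toF v), left_inv'] at h1
  exact h1.symm
end

section
/- If T is a tournament on 17 vertices that is not 4-colorable, and every tournament on 16 vertices contains a transitive subtournament on 5 vertices, and every 4-chromatic tournament on 12 vertices is a gluing of W_1 and TT_5, then the vertex set of T can be partitioned into sets A_1, A_2, B where A_1 and A_2 each induce a transitive tournament on 5 vertices and B induces a tournament isomorphic to W_1. -/
def w1 (i j : Fin 7) : Prop :=
  ((i : ℕ), (j : ℕ)) ∈ [(0,1), (0,2), (0,3), (4,0), (5,0), (6,0), (1,2), (2,3), (3,1),
    (4,5), (5,6), (6,4), (1,5), (1,6), (1,4), (2,6), (2,4), (5,2), (3,4), (3,5), (6,3)]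

/-- `B` induces a subtournament of `r` isomorphic to `W₁`. -/
def InducesW1 {V : Type*} [DecidableEq V] (r : V → V → Prop) (B : Finset V) : Prop :=
  ∃ g : Fin 7 → V, Function.Injective g ∧ Finset.image g Finset.univ = B ∧
    ∀ i j, r (g i) (g j) ↔ w1 i j

lemma transOn_mono {V : Type*} {r : V → V → Prop} {S S' : Set V} (h : S ⊆ S')
    (ht : TransOn r S') : TransOn r S :=
  fun a ha b hb c hc => ht a (h ha) b (h hb) c (h hc)

lemma tourn_asym {V : Type*} {r : V → V → Prop} (hT : IsTournament r) {a b : V}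
    (h1 : r a b) (h2 : r b a) : False := by
  rcases eq_or_ne a b with rfl | hne
  · exact hT.1 a h1
  · exact ((hT.2 a b hne).mp h1) h2

lemma tourn_total {V : Type*} {r : V → V → Prop} (hT : IsTournament r) {a b : V}
    (hne : a ≠ b) (h : ¬ r a b) : r b a := by
  by_contra h2
  exact h ((hT.2 a b hne).mpr h2)

lemma tt_exists {V : Type*} [DecidableEq V] (r : V → V → Prop) (hT : IsTournament r) :
    ∀ k (S : Finset V), 2 ^ k ≤ S.card →
      ∃ T ⊆ S, T.card = k + 1 ∧ TransOn r ↑T := by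
  intro k
  induction k with
  | zero =>
    intro S hS
    obtain ⟨v, hv⟩ := Finset.card_pos.mp (by simpa using hS)
    refine ⟨{v}, Finset.singleton_subset_iff.mpr hv, rfl, ?_⟩
    intro a ha b hb c hc hab hbc
    simp only [Finset.coe_singleton, Set.mem_singleton_iff] at ha hb
    subst ha; subst hb
    exact absurd hab (hT.1 _)
  | succ k ih =>
    intro S hS
    classical
    have h2k : 1 ≤ 2 ^ k := Nat.one_le_two_pow
    have hpow0 : 2 ^ (k+1) = 2 ^ k + 2 ^ k := by ring
    rw [hpow0] at hS
    obtain ⟨v, hv⟩ := Finset.card_pos.mp (show 0 < S.card by omega)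
    set O := (S.erase v).filter (fun x => r v x) with hO
    set I := (S.erase v).filter (fun x => ¬ r v x) with hI
    have hsum : O.card + I.card = (S.erase v).card := Finset.card_filter_add_card_filter_not _
    have hec : (S.erase v).card = S.card - 1 := Finset.card_erase_of_mem hv
    have hcase : 2 ^ k ≤ O.card ∨ 2 ^ k ≤ I.card := by omega
    rcases hcase with hc | hc
    · obtain ⟨T, hTsub, hTcard, hTtrans⟩ := ih O hc
      have hvT : v ∉ T := fun h => (Finset.mem_erase.mp (Finset.mem_filter.mp (hTsub h)).1).1 rfl
      have hout : ∀ t ∈ T, r v t := fun t ht => (Finset.mem_filter.mp (hTsub ht)).2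
      refine ⟨insert v T, ?_, ?_, ?_⟩
      · intro x hx
        rcases Finset.mem_insert.mp hx with rfl | hx
        · exact hv
        · exact Finset.mem_of_mem_erase (Finset.mem_filter.mp (hTsub hx)).1
      · rw [Finset.card_insert_of_notMem hvT, hTcard]
      · intro a ha b hb c hc2 hab hbc
        simp only [Finset.coe_insert, Set.mem_insert_iff, Finset.mem_coe] at ha hb hc2
        rcases ha with rfl | ha
        · rcases hc2 with rfl | hc2
          · exact absurd hbc (by
              rcases hb with rfl | hb
              · exact fun h => hT.1 _ h
              · exact fun h => tourn_asym hT h (hout b hb))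
          · exact hout c hc2
        · rcases hb with rfl | hb
          · exact absurd hab fun h => tourn_asym hT h (hout a ha)
          · rcases hc2 with rfl | hc2
            · exact absurd hbc fun h => tourn_asym hT h (hout b hb)
            · exact hTtrans a ha b hb c hc2 hab hbc
    · obtain ⟨T, hTsub, hTcard, hTtrans⟩ := ih I hc
      have hvT : v ∉ T := fun h => (Finset.mem_erase.mp (Finset.mem_filter.mp (hTsub h)).1).1 rfl
      have hin : ∀ t ∈ T, r t v := by
        intro t ht
        have h1 := Finset.mem_filter.mp (hTsub ht)
        exact tourn_total hT (Finset.mem_erase.mp h1.1).1.symm h1.2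
      refine ⟨insert v T, ?_, ?_, ?_⟩
      · intro x hx
        rcases Finset.mem_insert.mp hx with rfl | hx
        · exact hv
        · exact Finset.mem_of_mem_erase (Finset.mem_filter.mp (hTsub hx)).1
      · rw [Finset.card_insert_of_notMem hvT, hTcard]
      · intro a ha b hb c hc2 hab hbc
        simp only [Finset.coe_insert, Set.mem_insert_iff, Finset.mem_coe] at ha hb hc2
        rcases ha with rfl | ha
        · exact absurd hab (by
            rcases hb with rfl | hb
            · exact hT.1 _
            · exact fun h => tourn_asym hT h (hin b hb))
        · rcases hb with rfl | hb
          · exact absurd hbc (by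
              rcases hc2 with rfl | hc2
              · exact hT.1 _
              · exact fun h => tourn_asym hT h (hin c hc2))
          · rcases hc2 with rfl | hc2
            · exact hin a ha
            · exact hTtrans a ha b hb c hc2 hab hbc

lemma col4 {W : Type*} [Fintype W] [DecidableEq W] (s : W → W → Prop)
    (hT : IsTournament s) (hc : Fintype.card W = 12) : Colorable s 4 := by
  classical
  have hcu : (Finset.univ : Finset W).card = 12 := by simp [hc]
  obtain ⟨T₁, h1sub, h1card, h1trans⟩ := tt_exists s hT 3 Finset.univ (by rw [hcu]; norm_num)
  set S₂ := Finset.univ \ T₁ with hS₂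
  have hS₂card : S₂.card = 8 := by
    rw [hS₂, Finset.card_sdiff_of_subset h1sub]; omega
  obtain ⟨T₂, h2sub, h2card, h2trans⟩ := tt_exists s hT 3 S₂ (by rw [hS₂card]; norm_num)
  set S₃ := S₂ \ T₂ with hS₃
  have hS₃card : S₃.card = 4 := by
    rw [hS₃, Finset.card_sdiff_of_subset h2sub]; omega
  obtain ⟨T₃, h3sub, h3card, h3trans⟩ := tt_exists s hT 2 S₃ (by rw [hS₃card]; norm_num)
  set S₄ := S₃ \ T₃ with hS₄
  have hS₄card : S₄.card = 1 := by
    rw [hS₄, Finset.card_sdiff_of_subset h3sub]; omega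
  have h4trans : TransOn s ↑S₄ := by
    obtain ⟨x, hx⟩ := Finset.card_eq_one.mp hS₄card
    intro a ha b hb c hc hab hbc
    simp only [hx, Finset.coe_singleton, Set.mem_singleton_iff] at ha hb
    subst ha; subst hb
    exact absurd hab (hT.1 _)
  refine ⟨fun w => if w ∈ T₁ then 0 else if w ∈ T₂ then 1 else if w ∈ T₃ then 2 else 3, ?_⟩
  intro c
  fin_cases c
  · refine transOn_mono (S' := ↑T₁) ?_ h1trans
    intro v hv
    simp only [Set.mem_setOf_eq] at hv
    by_contra h
    simp only [Finset.mem_coe] at h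
    simp only [h, if_false] at hv
    split_ifs at hv <;> simp_all
  · refine transOn_mono (S' := ↑T₂) ?_ h2trans
    intro v hv
    simp only [Set.mem_setOf_eq] at hv
    split_ifs at hv with h1 h2 h3 <;> simp_all
  · refine transOn_mono (S' := ↑T₃) ?_ h3trans
    intro v hv
    simp only [Set.mem_setOf_eq] at hv
    split_ifs at hv with h1 h2 h3 <;> simp_all
  · refine transOn_mono (S' := ↑S₄) ?_ h4trans
    intro v hv
    simp only [Set.mem_setOf_eq] at hv
    split_ifs at hv with h1 h2 h3
    · simp_all
    · simp_all
    · simp_all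
    · simp only [Finset.mem_coe, hS₄, hS₃, hS₂, Finset.mem_sdiff, Finset.mem_univ, true_and]
      exact ⟨⟨h1, h2⟩, h3⟩

theorem stmt19
    (hTT5 : ∀ (W : Type) [Fintype W] [DecidableEq W] (s : W → W → Prop),
      IsTournament s → Fintype.card W = 16 →
      ∃ S : Finset W, S.card = 5 ∧ TransOn s ↑S)
    (hglue : ∀ (W : Type) [Fintype W] [DecidableEq W] (s : W → W → Prop),
      IsTournament s → Fintype.card W = 12 → ¬ Colorable s 3 → Colorable s 4 →
      ∃ B A : Finset W, Disjoint B A ∧ B ∪ A = Finset.univ ∧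
        InducesW1 s B ∧ A.card = 5 ∧ TransOn s ↑A)
    (V : Type) [Fintype V] [DecidableEq V] (r : V → V → Prop)
    (hT : IsTournament r) (hcard : Fintype.card V = 17) (hnc : ¬ Colorable r 4) :
    ∃ A₁ A₂ B : Finset V, Disjoint A₁ A₂ ∧ Disjoint A₁ B ∧ Disjoint A₂ B ∧
      A₁ ∪ A₂ ∪ B = Finset.univ ∧
      A₁.card = 5 ∧ TransOn r ↑A₁ ∧ A₂.card = 5 ∧ TransOn r ↑A₂ ∧
      InducesW1 r B := by
  classical
  -- pick a vertex
  have hne : Nonempty V := Fintype.card_pos_iff.mp (by omega)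
  obtain ⟨v₀⟩ := hne
  -- the 16-vertex subtournament
  let V' := {x : V // ¬ x = v₀}
  have hcard' : Fintype.card V' = 16 := by
    have := Fintype.card_subtype_compl (fun x : V => x = v₀)
    simp only [Fintype.card_subtype_eq] at this
    simp only [V', this, hcard]
  let s₀ : V' → V' → Prop := fun u v => r u.1 v.1
  have hT₀ : IsTournament s₀ := by
    constructor
    · exact fun v => hT.1 v.1
    · intro u v huv
      exact hT.2 u.1 v.1 (fun h => huv (Subtype.ext h))
  obtain ⟨S, hScard, hStrans⟩ := hTT5 V' s₀ hT₀ hcard'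
  -- A₁
  set A₁ : Finset V := S.image Subtype.val with hA₁def
  have hA₁card : A₁.card = 5 := by
    rw [hA₁def, Finset.card_image_of_injective _ Subtype.val_injective, hScard]
  have hA₁trans : TransOn r ↑A₁ := by
    intro a ha b hb c hc hab hbc
    simp only [hA₁def, Finset.coe_image, Set.mem_image, Finset.mem_coe] at ha hb hc
    obtain ⟨a', ha', rfl⟩ := ha
    obtain ⟨b', hb', rfl⟩ := hb
    obtain ⟨c', hc', rfl⟩ := hc
    exact hStrans a' ha' b' hb' c' hc' hab hbc
  -- the 12-vertex rest
  let W := {x : V // x ∉ A₁}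
  have hcardW : Fintype.card W = 12 := by
    have := Fintype.card_subtype_compl (fun x : V => x ∈ A₁)
    have h2 : Fintype.card {x : V // x ∈ A₁} = A₁.card := Fintype.card_coe A₁
    simp only [h2, hA₁card, hcard] at this
    exact this
  let s : W → W → Prop := fun u v => r u.1 v.1
  have hTs : IsTournament s := by
    constructor
    · exact fun v => hT.1 v.1
    · intro u v huv
      exact hT.2 u.1 v.1 (fun h => huv (Subtype.ext h))
  have hn3 : ¬ Colorable s 3 := by
    rintro ⟨f, hf⟩
    apply hnc
    refine ⟨fun x => if h : x ∈ A₁ then (3 : Fin 4) else (f ⟨x, h⟩).castSucc, ?_⟩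
    intro c a ha b hb c' hc' hab hbc
    simp only [Set.mem_setOf_eq] at ha hb hc'
    have hcast3 : ∀ (x : V) (h : x ∉ A₁), ((f ⟨x, h⟩).castSucc : Fin 4) ≠ 3 := by
      intro x h
      exact (Fin.castSucc_lt_last (f ⟨x, h⟩)).ne
    by_cases hA : a ∈ A₁
    · rw [dif_pos hA] at ha
      have hB : b ∈ A₁ := by
        by_contra hB
        rw [dif_neg hB] at hb
        exact hcast3 b hB (hb.trans ha.symm)
      have hC : c' ∈ A₁ := by
        by_contra hC
        rw [dif_neg hC] at hc'
        exact hcast3 c' hC (hc'.trans ha.symm)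
      exact hA₁trans a hA b hB c' hC hab hbc
    · rw [dif_neg hA] at ha
      have hB : b ∉ A₁ := by
        intro hB
        rw [dif_pos hB] at hb
        exact hcast3 a hA (ha.trans hb.symm)
      have hC : c' ∉ A₁ := by
        intro hC
        rw [dif_pos hC] at hc'
        exact hcast3 a hA (ha.trans hc'.symm)
      rw [dif_neg hB] at hb
      rw [dif_neg hC] at hc'
      have hfb : f ⟨b, hB⟩ = f ⟨a, hA⟩ := Fin.castSucc_injective _ (hb.trans ha.symm)
      have hfc : f ⟨c', hC⟩ = f ⟨a, hA⟩ := Fin.castSucc_injective _ (hc'.trans ha.symm)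
      exact hf (f ⟨a, hA⟩) ⟨a, hA⟩ rfl ⟨b, hB⟩ hfb ⟨c', hC⟩ hfc hab hbc
  have hc4 : Colorable s 4 := col4 s hTs hcardW
  obtain ⟨B', A', hdisj, hunion, hW1, hA'card, hA'trans⟩ := hglue W s hTs hcardW hn3 hc4
  refine ⟨A₁, A'.image Subtype.val, B'.image Subtype.val, ?_, ?_, ?_, ?_, hA₁card, hA₁trans, ?_, ?_, ?_⟩
  · rw [Finset.disjoint_left]
    intro x hx hx2
    simp only [Finset.mem_image] at hx2
    obtain ⟨y, _, rfl⟩ := hx2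
    exact y.2 hx
  · rw [Finset.disjoint_left]
    intro x hx hx2
    simp only [Finset.mem_image] at hx2
    obtain ⟨y, _, rfl⟩ := hx2
    exact y.2 hx
  · exact (Finset.disjoint_image Subtype.val_injective).mpr hdisj.symm
  · apply Finset.eq_univ_of_forall
    intro x
    simp only [Finset.mem_union, Finset.mem_image]
    by_cases hx : x ∈ A₁
    · exact Or.inl (Or.inl hx)
    · have : (⟨x, hx⟩ : W) ∈ B' ∪ A' := hunion ▸ Finset.mem_univ _
      rcases Finset.mem_union.mp this with h | h
      · exact Or.inr ⟨⟨x, hx⟩, h, rfl⟩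
      · exact Or.inl (Or.inr ⟨⟨x, hx⟩, h, rfl⟩)
  · rw [Finset.card_image_of_injective _ Subtype.val_injective, hA'card]
  · intro a ha b hb c hc hab hbc
    simp only [Finset.coe_image, Set.mem_image, Finset.mem_coe] at ha hb hc
    obtain ⟨a', ha', rfl⟩ := ha
    obtain ⟨b', hb', rfl⟩ := hb
    obtain ⟨c', hc', rfl⟩ := hc
    exact hA'trans a' ha' b' hb' c' hc' hab hbc
  · obtain ⟨g, hginj, hgimg, hgarcs⟩ := hW1
    refine ⟨fun i => (g i).1, Subtype.val_injective.comp hginj, ?_, hgarcs⟩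
    rw [show (fun i => (g i).1) = Subtype.val ∘ g from rfl, ← Finset.image_image, hgimg]
end
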